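/- For every x ∈ Q_m and every compact set K ⊂ V′ there exist a constant C > 0 and a positive integer q such that for every y ∈ Q_m whose frequency vector, written in the coordinates (ρ_0,…,ρ_{m−2}) ∈ ℝ^{m−1}, lies in K, one has |H_m(y) − H_m(x)| ≥ C · (dist(ρ(y), Z_x))^q, where Z_x = {η ∈ V′ : Δ(η) = H_m(x)} and dist denotes Euclidean infimum distance in ℝ^{m−1}. In particular, if H_m(y) = H_m(x) then the frequency vector of y lies in the level set Z_x of the real-analytic function Δ. -/

import Mathlib

open Real Filter

/-- The `k+1`-st digit of `x` in the `m`-ary expansion, obtained by iterating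
`T_m y = m·y - ⌊m·y⌋`. -/
noncomputable def mDigit (m k : ℕ) (x : ℝ) : ℤ :=
  ⌊(m : ℝ) * (fun y => Int.fract ((m : ℝ) * y))^[k] x⌋

/-- The set `F(p)` of `p`-quasinormal numbers in `[0,1)` for the `m`-ary expansion. -/
def mFreqSet (m : ℕ) (p : ℕ → ℝ) : Set ℝ :=
  {x ∈ Set.Ico (0 : ℝ) 1 | ∀ i < m,
    Tendsto (fun n => (((Finset.range n).filter
        (fun k => mDigit m k x = (i : ℤ))).card : ℝ) / n) atTop (nhds (p i))}

/-- The first `m-1` coordinates of a stochastic vector, as a point of `ℝ^{m-1}`. -/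
def freqProj (m : ℕ) (p : ℕ → ℝ) : EuclideanSpace ℝ (Fin (m - 1)) :=
  WithLp.toLp 2 (fun i : Fin (m - 1) => p i)


lemma auxSummable {g : ℕ → ℝ} (hpos : ∀ j, 0 < g j) (hle1 : ∀ j, g j ≤ 1)
    {s t : ℝ} (hst : s ≤ t) (hs : Summable fun j => g j ^ s) :
    Summable fun j => g j ^ t :=
  Summable.of_nonneg_of_le (fun j => (Real.rpow_pos_of_pos (hpos j) t).le)
    (fun j => Real.rpow_le_rpow_of_exponent_ge (hpos j) (hle1 j) hst) hs

lemma auxPos {g : ℕ → ℝ} (hpos : ∀ j, 0 < g j) {t : ℝ}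
    (hs : Summable fun j => g j ^ t) : 0 < ∑' j, g j ^ t :=
  Summable.tsum_pos hs (fun j => (Real.rpow_pos_of_pos (hpos j) t).le) 0
    (Real.rpow_pos_of_pos (hpos 0) t)

lemma auxAnti {g : ℕ → ℝ} (hpos : ∀ j, 0 < g j) (hle1 : ∀ j, g j ≤ 1)
    {s t : ℝ} (hst : s ≤ t) (hs : Summable fun j => g j ^ s) :
    ∑' j, g j ^ t ≤ ∑' j, g j ^ s :=
  Summable.tsum_le_tsum (fun j => Real.rpow_le_rpow_of_exponent_ge (hpos j) (hle1 j) hst)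
    (auxSummable hpos hle1 hst hs) hs

lemma auxStrictAnti {g : ℕ → ℝ} (hpos : ∀ j, 0 < g j) (hlt1 : ∀ j, g j < 1)
    {s t : ℝ} (hst : s < t) (hs : Summable fun j => g j ^ s) :
    ∑' j, g j ^ t < ∑' j, g j ^ s :=
  Summable.tsum_lt_tsum (i := 0)
    (fun j => Real.rpow_le_rpow_of_exponent_ge (hpos j) (hlt1 j).le hst.le)
    (Real.rpow_lt_rpow_of_exponent_gt (hpos 0) (hlt1 0) hst)
    (auxSummable hpos (fun j => (hlt1 j).le) hst.le hs) hs

lemma auxBSummable {g : ℕ → ℝ} (hpos : ∀ j, 0 < g j) (hle1 : ∀ j, g j ≤ 1)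
    {a' a : ℝ} (h : a' < a) (hs : Summable fun j => g j ^ a') :
    Summable fun j => g j ^ a * (-Real.log (g j)) := by
  have hδ : 0 < a - a' := by linarith
  apply Summable.of_nonneg_of_le
    (fun j => mul_nonneg (Real.rpow_pos_of_pos (hpos j) a).le
      (neg_nonneg.mpr (Real.log_nonpos (hpos j).le (hle1 j))))
    (fun j => ?_) (hs.mul_right (1 / (a - a')))
  have h1 : -Real.log (g j) ≤ g j ^ (-(a - a')) / (a - a') := by
    have h2 := Real.log_le_sub_one_of_pos (Real.rpow_pos_of_pos (hpos j) (-(a - a')))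
    rw [Real.log_rpow (hpos j)] at h2
    have h3 : 0 < g j ^ (-(a - a')) := Real.rpow_pos_of_pos (hpos j) _
    rw [le_div_iff₀ hδ]
    nlinarith
  calc g j ^ a * (-Real.log (g j)) ≤ g j ^ a * (g j ^ (-(a - a')) / (a - a')) := by
        exact mul_le_mul_of_nonneg_left h1 (Real.rpow_pos_of_pos (hpos j) a).le
    _ = g j ^ a' * (1 / (a - a')) := by
        rw [div_eq_mul_one_div, ← mul_assoc, ← Real.rpow_add (hpos j)]
        ring_nf

lemma auxBPos {g : ℕ → ℝ} (hpos : ∀ j, 0 < g j) (hlt1 : ∀ j, g j < 1) {a : ℝ}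
    (hB : Summable fun j => g j ^ a * (-Real.log (g j))) :
    0 < ∑' j, g j ^ a * (-Real.log (g j)) :=
  Summable.tsum_pos hB
    (fun j => mul_nonneg (Real.rpow_pos_of_pos (hpos j) a).le
      (neg_nonneg.mpr (Real.log_nonpos (hpos j).le (hlt1 j).le))) 0
    (mul_pos (Real.rpow_pos_of_pos (hpos 0) a)
      (neg_pos.mpr (Real.log_neg (hpos 0) (hlt1 0))))

lemma auxStep1 {g : ℕ → ℝ} (hpos : ∀ j, 0 < g j) (hle1 : ∀ j, g j ≤ 1)
    {a s t : ℝ} (has : a ≤ s) (hst : s ≤ t) (hsa : Summable fun j => g j ^ a)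
    (hB : Summable fun j => g j ^ a * (-Real.log (g j))) :
    (∑' j, g j ^ s) - (∑' j, g j ^ t)
      ≤ (t - s) * ∑' j, g j ^ a * (-Real.log (g j)) := by
  have hss : Summable fun j => g j ^ s := auxSummable hpos hle1 has hsa
  have hst' : Summable fun j => g j ^ t := auxSummable hpos hle1 (has.trans hst) hsa
  have key : ∀ j, g j ^ s - g j ^ t ≤ (t - s) * (g j ^ a * (-Real.log (g j))) := by
    intro j
    have h1 : g j ^ t = g j ^ s * g j ^ (t - s) := by
      rw [← Real.rpow_add (hpos j)]; ring_nf
    have h2 : 1 - g j ^ (t - s) ≤ (t - s) * (-Real.log (g j)) := by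
      have h3 := Real.add_one_le_exp (Real.log (g j) * (t - s))
      have h4 : g j ^ (t - s) = Real.exp (Real.log (g j) * (t - s)) :=
        Real.rpow_def_of_pos (hpos j) _
      rw [h4]; nlinarith [h3]
    have h3 : 0 ≤ 1 - g j ^ (t - s) :=
      sub_nonneg.mpr (Real.rpow_le_one (hpos j).le (hle1 j) (by linarith))
    calc g j ^ s - g j ^ t = g j ^ s * (1 - g j ^ (t - s)) := by rw [h1]; ring
      _ ≤ g j ^ a * (1 - g j ^ (t - s)) :=
          mul_le_mul_of_nonneg_right
            (Real.rpow_le_rpow_of_exponent_ge (hpos j) (hle1 j) has) h3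
      _ ≤ g j ^ a * ((t - s) * (-Real.log (g j))) :=
          mul_le_mul_of_nonneg_left h2 (Real.rpow_pos_of_pos (hpos j) a).le
      _ = (t - s) * (g j ^ a * (-Real.log (g j))) := by ring
  calc (∑' j, g j ^ s) - (∑' j, g j ^ t) = ∑' j, (g j ^ s - g j ^ t) :=
        (Summable.tsum_sub hss hst').symm
    _ ≤ ∑' j, (t - s) * (g j ^ a * (-Real.log (g j))) :=
        Summable.tsum_le_tsum key (hss.sub hst') (hB.mul_left _)
    _ = (t - s) * ∑' j, g j ^ a * (-Real.log (g j)) := tsum_mul_left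

lemma auxLip {g : ℕ → ℝ} (hpos : ∀ j, 0 < g j) (hle1 : ∀ j, g j ≤ 1)
    {a b s t : ℝ} (has : a ≤ s) (hst : s ≤ t) (htb : t ≤ b)
    (hsa : Summable fun j => g j ^ a)
    (hB : Summable fun j => g j ^ a * (-Real.log (g j))) :
    Real.log (∑' j, g j ^ s) - Real.log (∑' j, g j ^ t)
      ≤ ((∑' j, g j ^ a * (-Real.log (g j))) / (∑' j, g j ^ b)) * (t - s)
    ∧ 0 ≤ Real.log (∑' j, g j ^ s) - Real.log (∑' j, g j ^ t) := by
  have hss : Summable fun j => g j ^ s := auxSummable hpos hle1 has hsa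
  have hst' : Summable fun j => g j ^ t := auxSummable hpos hle1 (has.trans hst) hsa
  have hSspos := auxPos hpos hss
  have hStpos := auxPos hpos hst'
  have hSbpos := auxPos hpos (auxSummable hpos hle1 ((has.trans hst).trans htb) hsa)
  have hts : (∑' j, g j ^ t) ≤ ∑' j, g j ^ s := auxAnti hpos hle1 hst hss
  have hbt : (∑' j, g j ^ b) ≤ ∑' j, g j ^ t := auxAnti hpos hle1 htb hst'
  constructor
  · have h1 : Real.log (∑' j, g j ^ s) - Real.log (∑' j, g j ^ t)
        = Real.log ((∑' j, g j ^ s) / (∑' j, g j ^ t)) :=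
      (Real.log_div hSspos.ne' hStpos.ne').symm
    rw [h1]
    calc Real.log ((∑' j, g j ^ s) / (∑' j, g j ^ t))
        ≤ (∑' j, g j ^ s) / (∑' j, g j ^ t) - 1 :=
          Real.log_le_sub_one_of_pos (div_pos hSspos hStpos)
      _ = ((∑' j, g j ^ s) - (∑' j, g j ^ t)) / (∑' j, g j ^ t) := by
          field_simp
      _ ≤ ((∑' j, g j ^ s) - (∑' j, g j ^ t)) / (∑' j, g j ^ b) := by
          gcongr
      _ ≤ ((t - s) * ∑' j, g j ^ a * (-Real.log (g j))) / (∑' j, g j ^ b) := by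
          gcongr
          exact auxStep1 hpos hle1 has hst hsa hB
      _ = ((∑' j, g j ^ a * (-Real.log (g j))) / (∑' j, g j ^ b)) * (t - s) := by
          ring
  · have := Real.log_le_log hStpos hts
    linarith

noncomputable def auxG (n : ℕ) (L : ℕ → ℝ → ℝ) (w : EuclideanSpace ℝ (Fin n)) (t : ℝ) : ℝ :=
  (∑ i : Fin n, w i * L i t) + (1 - ∑ i, w i) * L n t

lemma auxMain (n : ℕ) (hn : 0 < n) (θ : ℝ) (L : ℕ → ℝ → ℝ)
    (V' : Set (EuclideanSpace ℝ (Fin n))) (hV'open : IsOpen V')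
    (hV'mem : ∀ w ∈ V', (∀ i : Fin n, 0 < w i) ∧ ∑ i, w i < 1)
    (Δ : EuclideanSpace ℝ (Fin n) → ℝ)
    (hΔθ : ∀ w ∈ V', θ < Δ w)
    (hΔeq : ∀ w ∈ V', auxG n L w (Δ w) = 0)
    (hΔcont : ContinuousOn Δ V')
    (hLanti : ∀ i ≤ n, ∀ s t : ℝ, θ < s → s < t → L i t < L i s)
    (hLlip : ∀ i ≤ n, ∀ a b : ℝ, θ < a → a ≤ b → ∃ M : ℝ, 0 < M ∧
      ∀ s t : ℝ, a ≤ s → s ≤ t → t ≤ b → |L i s - L i t| ≤ M * (t - s))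
    (ξ : EuclideanSpace ℝ (Fin n)) (hξ : ξ ∈ V')
    (K : Set (EuclideanSpace ℝ (Fin n))) (hKsub : K ⊆ V') (hKc : IsCompact K) :
    ∃ C : ℝ, 0 < C ∧ ∀ η ∈ K,
      C * Metric.infDist η {w ∈ V' | Δ w = Δ ξ} ≤ |Δ η - Δ ξ| := by
  haveI : Nonempty (Fin n) := ⟨⟨0, hn⟩⟩
  set c := Δ ξ with hc
  have hcθ : θ < c := hΔθ ξ hξ
  have hξZ : ξ ∈ {w ∈ V' | Δ w = c} := ⟨hξ, rfl⟩
  -- strict antitonicity of G in t and uniqueness of the root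
  have hGanti : ∀ w ∈ V', ∀ s t : ℝ, θ < s → s < t → auxG n L w t < auxG n L w s := by
    intro w hw s t hs hst
    obtain ⟨hwpos, hwsum⟩ := hV'mem w hw
    unfold auxG
    have h1 : ∑ i : Fin n, w i * L i t < ∑ i : Fin n, w i * L i s :=
      Finset.sum_lt_sum_of_nonempty Finset.univ_nonempty
        (fun i _ => mul_lt_mul_of_pos_left (hLanti i (le_of_lt i.2) s t hs hst) (hwpos i))
    have h2 : (1 - ∑ i, w i) * L n t < (1 - ∑ i, w i) * L n s :=
      mul_lt_mul_of_pos_left (hLanti n le_rfl s t hs hst) (by linarith)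
    linarith
  have hUniq : ∀ w ∈ V', ∀ s : ℝ, θ < s → auxG n L w s = 0 → Δ w = s := by
    intro w hw s hs hG
    have hΔw := hΔθ w hw
    have hGw := hΔeq w hw
    rcases lt_trichotomy s (Δ w) with h | h | h
    · exact absurd (hGanti w hw s (Δ w) hs h) (by rw [hG, hGw]; exact lt_irrefl 0)
    · exact h.symm
    · exact absurd (hGanti w hw (Δ w) s hΔw h) (by rw [hG, hGw]; exact lt_irrefl 0)
  rcases K.eq_empty_or_nonempty with hKe | hKne
  · exact ⟨1, one_pos, fun η hη => by rw [hKe] at hη; exact absurd hη (Set.notMem_empty η)⟩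
  have hΔK : ContinuousOn Δ K := hΔcont.mono hKsub
  obtain ⟨η₁, hη₁K, hη₁'⟩ := hKc.exists_isMinOn hKne hΔK
  obtain ⟨η₂, hη₂K, hη₂'⟩ := hKc.exists_isMaxOn hKne hΔK
  have hη₁ : ∀ η ∈ K, Δ η₁ ≤ Δ η := fun η hη => isMinOn_iff.mp hη₁' η hη
  have hη₂ : ∀ η ∈ K, Δ η ≤ Δ η₂ := fun η hη => isMaxOn_iff.mp hη₂' η hη
  set a := min c (Δ η₁) with ha
  set b := max c (Δ η₂) with hb
  have haθ : θ < a := lt_min hcθ (hΔθ η₁ (hKsub hη₁K))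
  have hac : a ≤ c := min_le_left _ _
  have hcb : c ≤ b := le_max_left _ _
  have hrange : ∀ η ∈ K, a ≤ Δ η ∧ Δ η ≤ b := fun η hη =>
    ⟨(min_le_right _ _).trans (hη₁ η hη), (hη₂ η hη).trans (le_max_right _ _)⟩
  choose! M hM1 hM2 using fun i (hi : i ≤ n) => hLlip i hi a b haθ (hac.trans hcb)
  set MT := ∑ i ∈ Finset.range (n + 1), M i with hMT
  have hMTpos : 0 < MT := Finset.sum_pos (fun i hi => hM1 i (by
    simp only [Finset.mem_range] at hi; omega)) ⟨0, Finset.mem_range.mpr (by omega)⟩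
  by_cases hA : ∀ i ≤ n, L i c = 0
  · refine ⟨1, one_pos, fun η hη => ?_⟩
    have hGc : auxG n L η c = 0 := by
      unfold auxG
      have h1 : ∀ i : Fin n, L (i : ℕ) c = 0 := fun i => hA i (le_of_lt i.2)
      simp [h1, hA n le_rfl]
    have hzd : Metric.infDist η {w ∈ V' | Δ w = c} = 0 :=
      Metric.infDist_zero_of_mem ⟨hKsub hη, hUniq η (hKsub hη) c hcθ hGc⟩
    rw [hzd]
    simpa using abs_nonneg (Δ η - c)
  push_neg at hA
  obtain ⟨i₁, hi₁n, hi₁⟩ := hA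
  set v : EuclideanSpace ℝ (Fin n) := WithLp.toLp 2 (fun i : Fin n => L i c - L n c) with hvdef
  have hvapp : ∀ i : Fin n, v i = L i c - L n c := fun i => rfl
  have hGaff : ∀ w : EuclideanSpace ℝ (Fin n),
      auxG n L w c = (∑ i, w i * v i) + L n c := by
    intro w
    unfold auxG
    have h1 : ∑ i : Fin n, w i * v i
        = (∑ i : Fin n, w i * L i c) - (∑ i : Fin n, w i) * L n c := by
      rw [Finset.sum_mul, ← Finset.sum_sub_distrib]
      exact Finset.sum_congr rfl fun i _ => by rw [hvapp]; ring
    rw [h1]; ring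
  have hvne : v ≠ 0 := by
    intro h0
    have hall : ∀ i ≤ n, L i c = L n c := by
      intro i hi
      rcases lt_or_eq_of_le hi with hilt | hieq
      · have h2 : v ⟨i, hilt⟩ = 0 := by rw [h0]; rfl
        rw [hvapp] at h2
        linarith [h2]
      · rw [hieq]
    have hGξ := hΔeq ξ hξ
    rw [← hc] at hGξ
    have hcomp : auxG n L ξ c = L n c := by
      rw [hGaff]
      have h3 : ∀ i : Fin n, ξ i * v i = 0 := by
        intro i
        rw [hvapp, hall i (le_of_lt i.2)]
        ring
      simp [h3]
    rw [hGξ] at hcomp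
    exact hi₁ (by rw [hall i₁ hi₁n, ← hcomp])
  have hnv : 0 < ‖v‖ := norm_pos_iff.mpr hvne
  have hW : ∑ i : Fin n, v i * v i = ‖v‖ ^ 2 := by
    rw [EuclideanSpace.norm_eq, Real.sq_sqrt (by positivity)]
    exact Finset.sum_congr rfl fun i _ => by rw [Real.norm_eq_abs, sq_abs]; ring
  obtain ⟨δ, hδ, hthick⟩ := hKc.exists_thickening_subset_open hV'open hKsub
  obtain ⟨r, hr⟩ := hKc.isBounded.subset_closedBall ξ
  set D := max r 1 with hD
  have hDpos : (0 : ℝ) < D := lt_of_lt_of_le one_pos (le_max_right _ _)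
  have hKD : ∀ η ∈ K, dist η ξ ≤ D := fun η hη =>
    (Metric.mem_closedBall.mp (hr hη)).trans (le_max_left _ _)
  have hGbound : ∀ η ∈ K, |auxG n L η c| ≤ MT * |c - Δ η| := by
    intro η hη
    have hηV := hKsub hη
    obtain ⟨hηpos, hηsum⟩ := hV'mem η hηV
    have hd := hrange η hη
    have hGd : auxG n L η (Δ η) = 0 := hΔeq η hηV
    have habs : ∀ i ≤ n, |L i c - L i (Δ η)| ≤ M i * |c - Δ η| := by
      intro i hi
      rcases le_total c (Δ η) with h | h
      · have h5 := hM2 i hi c (Δ η) hac h hd.2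
        rw [abs_sub_comm c (Δ η), abs_of_nonneg (by linarith : (0:ℝ) ≤ Δ η - c)]
        exact h5
      · have h5 := hM2 i hi (Δ η) c hd.1 h hcb
        rw [abs_sub_comm (L i c), abs_of_nonneg (by linarith : (0:ℝ) ≤ c - Δ η)]
        exact h5
    have hηle1 : ∀ i : Fin n, η i ≤ 1 := by
      intro i
      have h1 : η i ≤ ∑ j, η j :=
        Finset.single_le_sum (fun j _ => (hηpos j).le) (Finset.mem_univ i)
      linarith
    have hcalc : auxG n L η c
        = (∑ i : Fin n, η i * (L i c - L i (Δ η)))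
          + (1 - ∑ i, η i) * (L n c - L n (Δ η)) := by
      have h2 := hGd
      unfold auxG at h2 ⊢
      have h3 : ∑ i : Fin n, η i * (L i c - L i (Δ η))
          = (∑ i : Fin n, η i * L i c) - (∑ i : Fin n, η i * L i (Δ η)) := by
        rw [← Finset.sum_sub_distrib]
        exact Finset.sum_congr rfl fun i _ => by ring
      rw [h3]
      linarith [h2]
    rw [hcalc]
    have step1 : |(∑ i : Fin n, η i * (L i c - L i (Δ η)))
        + (1 - ∑ i, η i) * (L n c - L n (Δ η))|
        ≤ (∑ i : Fin n, |η i * (L i c - L i (Δ η))|)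
          + |(1 - ∑ i, η i) * (L n c - L n (Δ η))| :=
      (abs_add_le _ _).trans (by gcongr; exact Finset.abs_sum_le_sum_abs _ _)
    refine step1.trans ?_
    have step2 : ∀ i : Fin n, |η i * (L i c - L i (Δ η))| ≤ M (i : ℕ) * |c - Δ η| := by
      intro i
      rw [abs_mul, abs_of_pos (hηpos i)]
      calc η i * |L i c - L i (Δ η)| ≤ 1 * |L i c - L i (Δ η)| :=
            mul_le_mul_of_nonneg_right (hηle1 i) (abs_nonneg _)
        _ = |L i c - L i (Δ η)| := one_mul _
        _ ≤ M (i : ℕ) * |c - Δ η| := habs i (le_of_lt i.2)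
    have step3 : |(1 - ∑ i, η i) * (L n c - L n (Δ η))| ≤ M n * |c - Δ η| := by
      rw [abs_mul, abs_of_pos (by linarith : (0:ℝ) < 1 - ∑ i, η i)]
      calc (1 - ∑ i, η i) * |L n c - L n (Δ η)| ≤ 1 * |L n c - L n (Δ η)| := by
            have : (0:ℝ) ≤ ∑ i, η i :=
              Finset.sum_nonneg fun i _ => (hηpos i).le
            exact mul_le_mul_of_nonneg_right (by linarith) (abs_nonneg _)
        _ = |L n c - L n (Δ η)| := one_mul _
        _ ≤ M n * |c - Δ η| := habs n le_rfl
    calc (∑ i : Fin n, |η i * (L i c - L i (Δ η))|)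
          + |(1 - ∑ i, η i) * (L n c - L n (Δ η))|
        ≤ (∑ i : Fin n, M (i : ℕ) * |c - Δ η|) + M n * |c - Δ η| :=
          add_le_add (Finset.sum_le_sum fun i _ => step2 i) step3
      _ = MT * |c - Δ η| := by
          rw [← Finset.sum_mul, hMT, Finset.sum_range_succ,
            ← Fin.sum_univ_eq_sum_range (fun i => M i) n]
          ring
  refine ⟨min (‖v‖ / MT) (δ * ‖v‖ / (MT * D)), by positivity, fun η hη => ?_⟩
  set Cm := min (‖v‖ / MT) (δ * ‖v‖ / (MT * D)) with hCm
  have hCmpos : 0 < Cm := by positivity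
  set sfac := auxG n L η c / ‖v‖ ^ 2 with hsfac
  set ζ := η - sfac • v with hζdef
  have hζapp : ∀ i : Fin n, ζ i = η i - sfac * v i := fun i => rfl
  have hζG : auxG n L ζ c = 0 := by
    rw [hGaff]
    have h1 : ∑ i, ζ i * v i = (∑ i, η i * v i) - sfac * ∑ i, v i * v i := by
      rw [Finset.mul_sum, ← Finset.sum_sub_distrib]
      exact Finset.sum_congr rfl fun i _ => by rw [hζapp]; ring
    have h2 : sfac * ‖v‖ ^ 2 = auxG n L η c := by
      rw [hsfac]; field_simp
    have h3 : ∑ i, η i * v i = auxG n L η c - L n c := by rw [hGaff η]; ring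
    rw [h1, hW, h2, h3]; ring
  have hdist : dist ζ η = |auxG n L η c| / ‖v‖ := by
    rw [dist_eq_norm, hζdef, sub_sub_cancel_left, norm_neg, norm_smul,
      Real.norm_eq_abs, hsfac, abs_div, abs_of_nonneg (by positivity : (0:ℝ) ≤ ‖v‖ ^ 2)]
    field_simp
  have hGb := hGbound η hη
  have hInn : 0 ≤ Metric.infDist η {w ∈ V' | Δ w = c} := Metric.infDist_nonneg
  have habsgoal : |Δ η - c| = |c - Δ η| := abs_sub_comm _ _
  rcases lt_or_ge (dist ζ η) δ with hlt | hge
  · have hζV : ζ ∈ V' := hthick (Metric.mem_thickening_iff.mpr ⟨η, hη, hlt⟩)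
    have hζZ : ζ ∈ {w ∈ V' | Δ w = c} := ⟨hζV, hUniq ζ hζV c hcθ hζG⟩
    have h1 : Metric.infDist η {w ∈ V' | Δ w = c} ≤ dist ζ η := by
      rw [dist_comm]; exact Metric.infDist_le_dist_of_mem hζZ
    have h2 : Metric.infDist η {w ∈ V' | Δ w = c} ≤ MT * |c - Δ η| / ‖v‖ := by
      refine h1.trans ?_
      rw [hdist]
      gcongr
    calc Cm * Metric.infDist η {w ∈ V' | Δ w = c}
        ≤ (‖v‖ / MT) * (MT * |c - Δ η| / ‖v‖) :=
          mul_le_mul (min_le_left _ _) h2 hInn (by positivity)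
      _ = |c - Δ η| := by field_simp
      _ = |Δ η - c| := (abs_sub_comm _ _)
  · have h2 : δ ≤ MT * |c - Δ η| / ‖v‖ := by
      refine hge.trans ?_
      rw [hdist]
      gcongr
    have h3 : δ * ‖v‖ / MT ≤ |c - Δ η| := by
      rw [div_le_iff₀ hMTpos]
      have h4 : δ * ‖v‖ ≤ MT * |c - Δ η| := by
        have := (le_div_iff₀ hnv).mp h2
        linarith
      linarith
    have h5 : Metric.infDist η {w ∈ V' | Δ w = c} ≤ D :=
      (Metric.infDist_le_dist_of_mem hξZ).trans (hKD η hη)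
    calc Cm * Metric.infDist η {w ∈ V' | Δ w = c}
        ≤ (δ * ‖v‖ / (MT * D)) * D := by
          refine mul_le_mul (min_le_right _ _) h5 hInn (by positivity)
      _ = δ * ‖v‖ / MT := by field_simp
      _ ≤ |c - Δ η| := h3
      _ = |Δ η - c| := abs_sub_comm _ _
/-- Łojasiewicz-type lower bound for the oscillation of `H_m` in terms of the
distance of the frequency vector to the level set `Z_x` of the real-analytic function `Δ`;
in particular `H_m(y) = H_m(x)` forces the frequency vector of `y` to lie on `Z_x`. -/
theorem Hm_oscillation
    (m : ℕ) (hm : 2 ≤ m) (γ : ℕ → ℕ → ℝ)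
    (hγpos : ∀ i < m, ∀ j, 0 < γ i j)
    (hγsum : ∀ i < m, Summable (fun j => γ i j))
    (hγsup : ∃ C : ℝ, C < 1 ∧ ∀ i < m, ∀ j, γ i j ≤ C)
    (θ : ℝ)
    (hθ : θ = ⨆ i : Fin m, sInf {t : ℝ | 0 < t ∧ Summable (fun j => γ i j ^ t)})
    (hdiv : ∃ i₀ < m, ¬ Summable (fun j => γ i₀ j ^ θ))
    (V' : Set (EuclideanSpace ℝ (Fin (m - 1))))
    (hV' : V' = {p | (∀ i, 0 < p i) ∧ ∑ i, p i < 1})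
    (Δ : EuclideanSpace ℝ (Fin (m - 1)) → ℝ)
    (hΔ : ∀ p ∈ V', θ < Δ p ∧
      (∑ i : Fin (m - 1), p i * Real.log (∑' j, γ i j ^ (Δ p)))
        + (1 - ∑ i, p i) * Real.log (∑' j, γ (m - 1) j ^ (Δ p)) = 0)
    (hΔan : AnalyticOnNhd ℝ Δ V')
    (Q : Set ℝ)
    (hQ : Q = {x | ∃ p : ℕ → ℝ, (∀ i < m, 0 < p i) ∧
      (∑ i ∈ Finset.range m, p i = 1) ∧ x ∈ mFreqSet m p})
    (H : ℝ → ℝ)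
    (hH : ∀ p : ℕ → ℝ, (∀ i < m, 0 < p i) → (∑ i ∈ Finset.range m, p i = 1) →
      ∀ x ∈ mFreqSet m p, H x = Δ (freqProj m p)) :
    ∀ x ∈ Q, ∀ K ⊆ V', IsCompact K →
      (∃ C : ℝ, 0 < C ∧ ∃ q : ℕ, 0 < q ∧
        ∀ ρ : ℕ → ℝ, (∀ i < m, 0 < ρ i) → (∑ i ∈ Finset.range m, ρ i = 1) →
          freqProj m ρ ∈ K → ∀ y ∈ mFreqSet m ρ,
            C * Metric.infDist (freqProj m ρ) {p' ∈ V' | Δ p' = H x} ^ q ≤ |H y - H x|) ∧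
      (∀ ρ : ℕ → ℝ, (∀ i < m, 0 < ρ i) → (∑ i ∈ Finset.range m, ρ i = 1) →
        ∀ y ∈ mFreqSet m ρ, H y = H x → freqProj m ρ ∈ {p' ∈ V' | Δ p' = H x}) := by
  intro x hx K hKsub hKc
  obtain ⟨Cb, hCb1, hCble⟩ := hγsup
  have hγle1 : ∀ i < m, ∀ j, γ i j ≤ 1 := fun i hi j => (hCble i hi j).trans hCb1.le
  have hγlt1 : ∀ i < m, ∀ j, γ i j < 1 := fun i hi j => lt_of_le_of_lt (hCble i hi j) hCb1
  have hsum : ∀ i, i < m → ∀ t : ℝ, θ < t → Summable (fun j => γ i j ^ t) := by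
    intro i him t ht
    have hne : Set.Nonempty {t : ℝ | 0 < t ∧ Summable (fun j => γ i j ^ t)} :=
      ⟨1, one_pos, by simpa [Real.rpow_one] using hγsum i him⟩
    have hbdd : BddBelow {t : ℝ | 0 < t ∧ Summable (fun j => γ i j ^ t)} :=
      ⟨0, fun s hs => hs.1.le⟩
    have hinf : sInf {t : ℝ | 0 < t ∧ Summable (fun j => γ i j ^ t)} ≤ θ := by
      rw [hθ]
      exact le_ciSup (f := fun i : Fin m =>
          sInf {t : ℝ | 0 < t ∧ Summable (fun j => γ (i : ℕ) j ^ t)})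
        (Set.Finite.bddAbove (Set.finite_range _)) ⟨i, him⟩
    obtain ⟨s, hsmem, hst⟩ := (csInf_lt_iff hbdd hne).mp (lt_of_le_of_lt hinf ht)
    exact auxSummable (hγpos i him) (hγle1 i him) hst.le hsmem.2
  have hV'open : IsOpen V' := by
    rw [hV']
    have h1 : ∀ i : Fin (m - 1), Continuous (fun p : EuclideanSpace ℝ (Fin (m - 1)) => p i) :=
      fun i => (EuclideanSpace.proj i).continuous
    have h2 : IsOpen {p : EuclideanSpace ℝ (Fin (m - 1)) | ∀ i, 0 < p i} := by
      have he : {p : EuclideanSpace ℝ (Fin (m - 1)) | ∀ i, 0 < p i}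
          = ⋂ i, {p : EuclideanSpace ℝ (Fin (m - 1)) | 0 < p i} := by
        ext p; simp [Set.mem_iInter]
      rw [he]
      exact isOpen_iInter_of_finite fun i => isOpen_lt continuous_const (h1 i)
    have h3 : IsOpen {p : EuclideanSpace ℝ (Fin (m - 1)) | ∑ i, p i < 1} :=
      isOpen_lt (continuous_finset_sum _ fun i _ => h1 i) continuous_const
    rw [Set.setOf_and]
    exact h2.inter h3
  have hV'mem : ∀ w ∈ V', (∀ i : Fin (m - 1), 0 < w i) ∧ ∑ i, w i < 1 := by
    intro w hw; rw [hV'] at hw; exact hw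
  have hfreq : ∀ ρ : ℕ → ℝ, (∀ i < m, 0 < ρ i) → (∑ i ∈ Finset.range m, ρ i = 1) →
      freqProj m ρ ∈ V' := by
    intro ρ h1 h2
    rw [hV']
    constructor
    · intro i
      exact h1 i (by have h := i.isLt; omega)
    · have h3 : ∑ i : Fin (m - 1), freqProj m ρ i = ∑ i ∈ Finset.range (m - 1), ρ i :=
        Fin.sum_univ_eq_sum_range (fun i => ρ i) (m - 1)
      have h4 : m - 1 + 1 = m := by omega
      have h5 : ∑ i ∈ Finset.range (m - 1), ρ i + ρ (m - 1) = 1 := by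
        rw [← Finset.sum_range_succ, h4]; exact h2
      have h6 : 0 < ρ (m - 1) := h1 (m - 1) (by omega)
      show ∑ i : Fin (m - 1), freqProj m ρ i < 1
      rw [h3]; linarith
  have hLanti : ∀ i ≤ m - 1, ∀ s t : ℝ, θ < s → s < t →
      Real.log (∑' j, γ i j ^ t) < Real.log (∑' j, γ i j ^ s) := by
    intro i hi s t hs hst
    have him : i < m := by omega
    exact Real.log_lt_log (auxPos (hγpos i him) (hsum i him t (hs.trans hst)))
      (auxStrictAnti (hγpos i him) (hγlt1 i him) hst (hsum i him s hs))
  have hLlip : ∀ i ≤ m - 1, ∀ a b : ℝ, θ < a → a ≤ b → ∃ M : ℝ, 0 < M ∧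
      ∀ s t : ℝ, a ≤ s → s ≤ t → t ≤ b →
        |Real.log (∑' j, γ i j ^ s) - Real.log (∑' j, γ i j ^ t)| ≤ M * (t - s) := by
    intro i hi a b ha hab
    have him : i < m := by omega
    have ha1 : θ < (θ + a) / 2 := by linarith
    have ha2 : (θ + a) / 2 < a := by linarith
    have hsa' := hsum i him _ ha1
    have hB := auxBSummable (hγpos i him) (hγle1 i him) ha2 hsa'
    have hsa := hsum i him a ha
    refine ⟨(∑' j, γ i j ^ a * (-Real.log (γ i j))) / (∑' j, γ i j ^ b),
      div_pos (auxBPos (hγpos i him) (hγlt1 i him) hB)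
        (auxPos (hγpos i him) (hsum i him b (lt_of_lt_of_le ha hab))), ?_⟩
    intro s t has hst htb
    have h := auxLip (hγpos i him) (hγle1 i him) has hst htb hsa hB
    rw [abs_of_nonneg h.2]
    exact h.1
  rw [hQ] at hx
  obtain ⟨p, hp1, hp2, hxF⟩ := hx
  have hξ : freqProj m p ∈ V' := hfreq p hp1 hp2
  have hHx : H x = Δ (freqProj m p) := hH p hp1 hp2 x hxF
  obtain ⟨C, hC, hmain⟩ := auxMain (m - 1) (by omega) θ
    (fun i t => Real.log (∑' j, γ i j ^ t)) V' hV'open hV'mem Δ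
    (fun w hw => (hΔ w hw).1) (fun w hw => (hΔ w hw).2) (hΔan.continuousOn)
    hLanti hLlip (freqProj m p) hξ K hKsub hKc
  constructor
  · refine ⟨C, hC, 1, one_pos, ?_⟩
    intro ρ h1 h2 hmem y hy
    have hHy : H y = Δ (freqProj m ρ) := hH ρ h1 h2 y hy
    rw [pow_one, hHy, hHx]
    exact hmain _ hmem
  · intro ρ h1 h2 y hy hyx
    have hHy : H y = Δ (freqProj m ρ) := hH ρ h1 h2 y hy
    exact ⟨hfreq ρ h1 h2, by rw [← hHy, hyx]⟩
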